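/- If M is a finitary matroid (every circuit of M is finite) and B₀, B₁ are bases of M, then there is a bijection f : B₀ → B₁ such that (B₀ \ {x}) ∪ {f(x)} is a base of M for each x ∈ B₀. -/

import Mathlib

open Set
namespace AP
variable {α : Type*} {M : Matroid α} {B B₀ B₁ I S : Set α} {e x : α}

lemma exists_finite_closure_witness [M.Finitary]
    (hI : M.Indep I) (he : e ∈ M.closure I) (heI : e ∉ I) :
    ∃ S ⊆ I, S.Finite ∧ e ∈ M.closure S := by
  have hdep : M.Dep (insert e I) := by
    rcases hI.mem_closure_iff.1 he with h | h
    · exact h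
    · exact absurd h heI
  have hnind : ¬ M.Indep (insert e I) := hdep.not_indep
  have : ∃ J, J ⊆ insert e I ∧ J.Finite ∧ ¬ M.Indep J := by
    by_contra hcon
    push_neg at hcon
    exact hnind (Matroid.Finitary.indep_of_forall_finite _ (fun J hJ hJf => hcon J hJ hJf))
  obtain ⟨J, hJsub, hJfin, hJnind⟩ := this
  have heJ : e ∈ J := by
    by_contra heJ
    exact hJnind (hI.subset (fun a ha => (hJsub ha).resolve_left (fun h => heJ (h ▸ ha))))
  refine ⟨J \ {e}, fun a ha => (hJsub ha.1).resolve_left ha.2, hJfin.diff, ?_⟩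
  have hSI : J \ {e} ⊆ I := fun a ha => (hJsub ha.1).resolve_left ha.2
  have hSind : M.Indep (J \ {e}) := hI.subset hSI
  rw [hSind.mem_closure_iff]
  left
  rw [Matroid.Dep, insert_diff_singleton, insert_eq_of_mem heJ]
  exact ⟨hJnind, hJsub.trans (insert_subset (M.mem_ground_of_mem_closure he) hI.subset_ground)⟩

lemma key_choice [M.Finitary]
    (hB : M.IsBase B) (hB₀ : M.IsBase B₀) (hx : x ∈ B₀) (hxB : x ∉ B) :
    ∃ y ∈ B, y ∉ M.closure (B₀ \ {x}) ∧ M.IsBase (insert x (B \ {y})) := by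
  classical
  have hxE : x ∈ M.E := hB₀.subset_ground hx
  have hxcl : x ∈ M.closure B := by rw [hB.closure_eq]; exact hxE
  obtain ⟨S, hSB, hSfin, hScl⟩ := exists_finite_closure_witness hB.indep hxcl hxB
  have hexn : ∃ n, ∃ S, S ⊆ B ∧ S.Finite ∧ x ∈ M.closure S ∧ S.ncard = n :=
    ⟨S.ncard, S, hSB, hSfin, hScl, rfl⟩
  obtain ⟨J, hJB, hJfin, hJcl, hJcard⟩ := Nat.find_spec hexn
  -- minimality: proper subsets don't span x
  have hmin : ∀ y ∈ J, x ∉ M.closure (J \ {y}) := by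
    intro y hy hcon
    have hlt : (J \ {y}).ncard < Nat.find hexn := by
      rw [← hJcard]
      exact Set.ncard_diff_singleton_lt_of_mem hy hJfin
    exact Nat.find_min hexn hlt ⟨J \ {y}, (diff_subset).trans hJB, hJfin.diff, hcon, rfl⟩
  have hJy : ∀ y ∈ J, x ∉ M.closure (B \ {y}) := by
    intro y hy hcon
    have h2 : x ∈ M.closure (insert y (J \ {y})) := by
      rwa [insert_diff_singleton, insert_eq_of_mem hy]
    have h3 := M.closure_exchange (X := J \ {y}) (e := x) (f := y) ⟨h2, hmin y hy⟩
    have h4 : y ∈ M.closure (insert x (B \ {y})) :=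
      M.closure_subset_closure (insert_subset_insert (diff_subset_diff_left hJB)) h3.1
    rw [Matroid.closure_insert_eq_of_mem_closure hcon] at h4
    exact hB.indep.notMem_closure_sdiff_of_mem (hJB hy) h4
  have hex : ∃ y ∈ J, y ∉ M.closure (B₀ \ {x}) := by
    by_contra hcon
    push_neg at hcon
    have : x ∈ M.closure (B₀ \ {x}) :=
      M.closure_subset_closure_of_subset_closure hcon hJcl
    exact hB₀.indep.notMem_closure_sdiff_of_mem hx this
  obtain ⟨y, hyJ, hycl⟩ := hex
  have hind : M.Indep (insert x (B \ {y})) := by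
    rw [(hB.indep.subset diff_subset).insert_indep_iff_of_notMem (fun h => hxB h.1)]
    exact ⟨hxE, hJy y hyJ⟩
  exact ⟨y, hJB hyJ, hycl, hB.exchange_isBase_of_indep hxB hind⟩

/-- The invariant for partial exchange functions (sets of pairs). -/
def Good (M : Matroid α) (B₀ B₁ : Set α) (s : Set (α × α)) : Prop :=
  (∀ p ∈ s, p.1 ∈ B₀ \ B₁ ∧ p.2 ∈ B₁ \ B₀ ∧ p.2 ∉ M.closure (B₀ \ {p.1})) ∧
  (∀ p ∈ s, ∀ q ∈ s, p.1 = q.1 → p = q) ∧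
  (∀ p ∈ s, ∀ q ∈ s, p.2 = q.2 → p = q) ∧
  M.IsBase ((B₁ \ (Prod.snd '' s)) ∪ Prod.fst '' s)

def GoodC (M : Matroid α) (B₀ B₁ : Set α) (Sw : α → Set α) (s : Set (α × α)) : Prop :=
  Good M B₀ B₁ s ∧ ∀ p ∈ s, Sw p.2 ∩ (B₀ \ B₁) ⊆ Prod.fst '' s

lemma Good.fst_subset (h : Good M B₀ B₁ s) : Prod.fst '' s ⊆ B₀ \ B₁ := by
  rintro a ⟨p, hp, rfl⟩; exact (h.1 p hp).1

lemma Good.snd_subset (h : Good M B₀ B₁ s) : Prod.snd '' s ⊆ B₁ \ B₀ := by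
  rintro a ⟨p, hp, rfl⟩; exact (h.1 p hp).2.1

variable {s : Set (α × α)} {Sw : α → Set α}

lemma Good_empty (hB₁ : M.IsBase B₁) : Good M B₀ B₁ (∅ : Set (α × α)) := by
  refine ⟨by simp, by simp, by simp, ?_⟩
  simp only [image_empty, diff_empty, union_empty]
  exact hB₁

lemma GoodC_empty (hB₁ : M.IsBase B₁) : GoodC M B₀ B₁ Sw (∅ : Set (α × α)) :=
  ⟨Good_empty hB₁, by simp⟩

/-- a finite set inside a union of a chain lies inside one member -/
lemma finite_subset_chain {c : Set (Set β)} (hc : IsChain (· ⊆ ·) c) (hne : c.Nonempty)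
    {F : Set β} (hF : F.Finite) (h : F ⊆ ⋃₀ c) : ∃ t ∈ c, F ⊆ t := by
  classical
  refine Set.Finite.induction_on (motive := fun F _ => F ⊆ ⋃₀ c → ∃ t ∈ c, F ⊆ t) F hF
    (fun _ => ⟨hne.choose, hne.choose_spec, empty_subset _⟩) ?_ h
  rintro a F haF hFfin ih h
  obtain ⟨t₁, ht₁c, ht₁⟩ := ih (subset_trans (subset_insert a F) h)
  obtain ⟨t₂, ht₂c, hat₂⟩ := h (mem_insert a F)
  rcases hc.total ht₁c ht₂c with h12 | h21
  · exact ⟨t₂, ht₂c, insert_subset hat₂ (ht₁.trans h12)⟩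
  · exact ⟨t₁, ht₁c, insert_subset (h21 hat₂) ht₁⟩


variable {Sw : α → Set α} {s : Set (α × α)}

lemma limit_base [M.Finitary] (hB₀ : M.IsBase B₀) (hB₁ : M.IsBase B₁)
    (hSw : ∀ y ∈ B₁ \ B₀, Sw y ⊆ B₀ ∧ (Sw y).Finite ∧ y ∈ M.closure (Sw y))
    (hpt : ∀ p ∈ s, p.1 ∈ B₀ \ B₁ ∧ p.2 ∈ B₁ \ B₀)
    (hind : ∀ F, F ⊆ (B₁ \ Prod.snd '' s) ∪ Prod.fst '' s → F.Finite → M.Indep F)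
    (hcov : ∀ p ∈ s, Sw p.2 ∩ (B₀ \ B₁) ⊆ Prod.fst '' s) :
    M.IsBase ((B₁ \ Prod.snd '' s) ∪ Prod.fst '' s) := by
  set T := (B₁ \ Prod.snd '' s) ∪ Prod.fst '' s with hT
  have hP : Prod.fst '' s ⊆ B₀ \ B₁ := by rintro a ⟨p, hp, rfl⟩; exact (hpt p hp).1
  have hTE : T ⊆ M.E :=
    union_subset (diff_subset.trans hB₁.subset_ground)
      ((hP.trans diff_subset).trans hB₀.subset_ground)
  have hTind : M.Indep T :=
    Matroid.indep_of_forall_finite_subset_indep _ (fun F hF hFfin => hind F hF hFfin)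
  have hB₁cl : B₁ ⊆ M.closure T := by
    intro y hy
    by_cases hyQ : y ∈ Prod.snd '' s
    · obtain ⟨p, hp, rfl⟩ := hyQ
      have hyY : p.2 ∈ B₁ \ B₀ := (hpt p hp).2
      obtain ⟨hSwB₀, -, hycl⟩ := hSw _ hyY
      refine M.closure_subset_closure ?_ hycl
      intro a ha
      by_cases haX : a ∈ B₀ \ B₁
      · exact Or.inr (hcov p hp ⟨ha, haX⟩)
      · have haB₀ : a ∈ B₀ := hSwB₀ ha
        have haB₁ : a ∈ B₁ := by by_contra h; exact haX ⟨haB₀, h⟩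
        refine Or.inl ⟨haB₁, fun hq => ?_⟩
        obtain ⟨q, hqs, hqa⟩ := hq
        exact ((hpt q hqs).2).2 (hqa ▸ haB₀)
    · exact M.subset_closure T hTE (Or.inl ⟨hy, hyQ⟩)
  have hspan : M.E ⊆ M.closure T := by
    rw [← hB₁.closure_eq]
    exact M.closure_subset_closure_of_subset_closure hB₁cl
  exact hTind.isBase_of_ground_subset_closure hspan

lemma GoodC_sUnion [M.Finitary] (hB₀ : M.IsBase B₀) (hB₁ : M.IsBase B₁)
    (hSw : ∀ y ∈ B₁ \ B₀, Sw y ⊆ B₀ ∧ (Sw y).Finite ∧ y ∈ M.closure (Sw y))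
    {c : Set (Set (α × α))} (hc : IsChain (· ⊆ ·) c) (hne : c.Nonempty)
    (hcG : ∀ t ∈ c, GoodC M B₀ B₁ Sw t) : GoodC M B₀ B₁ Sw (⋃₀ c) := by
  have hmem : ∀ p ∈ ⋃₀ c, ∃ t ∈ c, p ∈ t := fun p hp => hp
  have hpt : ∀ p ∈ ⋃₀ c, p.1 ∈ B₀ \ B₁ ∧ p.2 ∈ B₁ \ B₀ ∧ p.2 ∉ M.closure (B₀ \ {p.1}) := by
    intro p hp; obtain ⟨t, htc, hpt⟩ := hp
    exact (hcG t htc).1.1 p hpt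
  have hfun : ∀ p ∈ ⋃₀ c, ∀ q ∈ ⋃₀ c, p.1 = q.1 → p = q := by
    rintro p ⟨t₁, ht₁, hp⟩ q ⟨t₂, ht₂, hq⟩ heq
    rcases hc.total ht₁ ht₂ with h | h
    · exact (hcG t₂ ht₂).1.2.1 p (h hp) q hq heq
    · exact (hcG t₁ ht₁).1.2.1 p hp q (h hq) heq
  have hinj : ∀ p ∈ ⋃₀ c, ∀ q ∈ ⋃₀ c, p.2 = q.2 → p = q := by
    rintro p ⟨t₁, ht₁, hp⟩ q ⟨t₂, ht₂, hq⟩ heq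
    rcases hc.total ht₁ ht₂ with h | h
    · exact (hcG t₂ ht₂).1.2.2.1 p (h hp) q hq heq
    · exact (hcG t₁ ht₁).1.2.2.1 p hp q (h hq) heq
  have hcov : ∀ p ∈ ⋃₀ c, Sw p.2 ∩ (B₀ \ B₁) ⊆ Prod.fst '' ⋃₀ c := by
    rintro p ⟨t, htc, hp⟩
    exact ((hcG t htc).2 p hp).trans (image_mono (subset_sUnion_of_mem htc))
  refine ⟨⟨hpt, hfun, hinj, ?_⟩, hcov⟩
  refine limit_base hB₀ hB₁ hSw (fun p hp => ⟨(hpt p hp).1, (hpt p hp).2.1⟩) ?_ hcov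
  intro F hF hFfin
  -- find a single chain member containing F ∩ (fst '' ⋃₀ c)
  have hc' : IsChain (· ⊆ ·) ((fun t => Prod.fst '' t) '' c) := by
    rintro _ ⟨t₁, ht₁, rfl⟩ _ ⟨t₂, ht₂, rfl⟩ -
    rcases hc.total ht₁ ht₂ with h | h
    · exact Or.inl (image_mono h)
    · exact Or.inr (image_mono h)
  have hne' : ((fun t => Prod.fst '' t) '' c).Nonempty := hne.image _
  have hsub : F ∩ (Prod.fst '' ⋃₀ c) ⊆ ⋃₀ ((fun t => Prod.fst '' t) '' c) := by
    rintro a ⟨-, p, ⟨t, htc, hpt⟩, rfl⟩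
    exact ⟨Prod.fst '' t, mem_image_of_mem _ htc, mem_image_of_mem _ hpt⟩
  obtain ⟨t', ⟨t₀, ht₀, rfl⟩, ht'sub⟩ :=
    finite_subset_chain hc' hne' (hFfin.inter_of_left _) hsub
  have hFsub : F ⊆ (B₁ \ Prod.snd '' t₀) ∪ Prod.fst '' t₀ := by
    intro a haF
    by_cases haP : a ∈ Prod.fst '' ⋃₀ c
    · exact Or.inr (ht'sub ⟨haF, haP⟩)
    · rcases hF haF with ⟨haB₁, haQ⟩ | haP'
      · refine Or.inl ⟨haB₁, fun h => haQ (image_mono (subset_sUnion_of_mem ht₀) h)⟩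
      · exact absurd haP' haP
  exact ((hcG t₀ ht₀).1.2.2.2.indep).subset hFsub

lemma extend_pair [M.Finitary] (hB₀ : M.IsBase B₀) (hB₁ : M.IsBase B₁)
    (hG : Good M B₀ B₁ s) {x : α} (hx : x ∈ B₀ \ B₁) (hxP : x ∉ Prod.fst '' s) :
    ∃ y, (y ∈ B₁ \ B₀ ∧ y ∉ Prod.snd '' s ∧ y ∉ M.closure (B₀ \ {x})) ∧
      Good M B₀ B₁ (insert (x, y) s) := by
  have hBbase := hG.2.2.2
  have hxB : x ∉ (B₁ \ Prod.snd '' s) ∪ Prod.fst '' s := by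
    rintro (⟨hxB₁, -⟩ | hxP')
    exacts [hx.2 hxB₁, hxP hxP']
  obtain ⟨y, hyB, hycl, hbase⟩ := key_choice hBbase hB₀ hx.1 hxB
  have hyB₀ : y ∉ B₀ := by
    intro hyB₀
    have hyx : y ≠ x := by rintro rfl; exact hxB hyB
    exact hycl (M.subset_closure (B₀ \ {x})
      (diff_subset.trans hB₀.subset_ground) ⟨hyB₀, hyx⟩)
  have hyP : y ∉ Prod.fst '' s := fun h => hyB₀ (hG.fst_subset h).1
  have hyQ : y ∉ Prod.snd '' s := by
    rcases hyB with ⟨-, h⟩ | h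
    exacts [h, absurd h hyP]
  have hyB₁ : y ∈ B₁ := by
    rcases hyB with ⟨h, -⟩ | h
    exacts [h, absurd h hyP]
  have hyx : y ≠ x := by rintro rfl; exact hxB hyB
  have setEq : (B₁ \ Prod.snd '' insert (x, y) s) ∪ Prod.fst '' insert (x, y) s
      = insert x (((B₁ \ Prod.snd '' s) ∪ Prod.fst '' s) \ {y}) := by
    rw [image_insert_eq, image_insert_eq]
    ext a
    by_cases hay : a = y
    · subst hay
      simp only [mem_union, mem_diff, mem_insert_iff, mem_singleton_iff]
      constructor
      · rintro (⟨-, h⟩ | (h | h))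
        · exact absurd (by simp) h
        · exact absurd h hyx
        · exact absurd h hyP
      · rintro (h | ⟨-, h⟩)
        · exact absurd h hyx
        · exact absurd (by simp) h
    · simp only [mem_union, mem_diff, mem_insert_iff, mem_singleton_iff]
      constructor
      · rintro (⟨h1, h2⟩ | (h | h))
        · push_neg at h2
          exact Or.inr ⟨Or.inl ⟨h1, h2.2⟩, hay⟩
        · exact Or.inl h
        · exact Or.inr ⟨Or.inr h, hay⟩
      · rintro (h | ⟨(⟨h1, h2⟩ | h), -⟩)
        · exact Or.inr (Or.inl h)
        · exact Or.inl ⟨h1, fun h' => h2 (h'.resolve_left hay)⟩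
        · exact Or.inr (Or.inr h)
  refine ⟨y, ⟨⟨hyB₁, hyB₀⟩, hyQ, hycl⟩, ?_, ?_, ?_, ?_⟩
  · rintro p (rfl | hp)
    · exact ⟨hx, ⟨hyB₁, hyB₀⟩, hycl⟩
    · exact hG.1 p hp
  · rintro p (rfl | hp) q (rfl | hq) heq
    · rfl
    · exact absurd ⟨q, hq, heq.symm⟩ hxP
    · exact absurd ⟨p, hp, heq⟩ hxP
    · exact hG.2.1 p hp q hq heq
  · rintro p (rfl | hp) q (rfl | hq) heq
    · rfl
    · exact absurd ⟨q, hq, heq.symm⟩ hyQ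
    · exact absurd ⟨p, hp, heq⟩ hyQ
    · exact hG.2.2.1 p hp q hq heq
  · rw [setEq]
    exact hbase

/-! ### The queue machine for the extension step -/

variable (M B₀ B₁ Sw) in
def StInv (sq : Set (α × α) × List α) : Prop :=
  Good M B₀ B₁ sq.1 ∧ (∀ x ∈ sq.2, x ∈ B₀ \ B₁) ∧
  (∀ p ∈ sq.1, Sw p.2 ∩ (B₀ \ B₁) ⊆ Prod.fst '' sq.1 ∪ {a | a ∈ sq.2})

lemma step_ex [M.Finitary] (hB₀ : M.IsBase B₀) (hB₁ : M.IsBase B₁)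
    (hSw : ∀ y ∈ B₁ \ B₀, Sw y ⊆ B₀ ∧ (Sw y).Finite ∧ y ∈ M.closure (Sw y))
    (sq : Set (α × α) × List α) (h : StInv M B₀ B₁ Sw sq) :
    ∃ sq' : Set (α × α) × List α, StInv M B₀ B₁ Sw sq' ∧ sq.1 ⊆ sq'.1 ∧
      (∀ x rest, sq.2 = x :: rest →
        (x ∈ Prod.fst '' sq'.1 ∧ ∃ app, sq'.2 = rest ++ app)) := by
  classical
  obtain ⟨s, q⟩ := sq
  obtain ⟨hG, hq, hcov⟩ := h
  match q with
  | [] => exact ⟨(s, []), ⟨hG, hq, hcov⟩, Subset.rfl, fun x rest h => by simp at h⟩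
  | x :: rest =>
    by_cases hxP : x ∈ Prod.fst '' s
    · refine ⟨(s, rest), ⟨hG, fun a ha => hq a (List.mem_cons_of_mem _ ha), ?_⟩,
        Subset.rfl, ?_⟩
      · intro p hp a ha
        rcases hcov p hp ha with haP | haq
        · exact Or.inl haP
        · rcases List.mem_cons.1 haq with rfl | har
          · exact Or.inl hxP
          · exact Or.inr har
      · rintro x' rest' heq
        injection heq with h1 h2
        subst h1; subst h2
        exact ⟨hxP, [], by simp⟩
    · have hx : x ∈ B₀ \ B₁ := hq x (List.mem_cons_self)
      obtain ⟨y, ⟨hyY, hyQ, hycl⟩, hG'⟩ := extend_pair hB₀ hB₁ hG hx hxP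
      have hfin : (Sw y ∩ (B₀ \ B₁)).Finite := ((hSw y hyY).2.1).inter_of_left _
      refine ⟨(insert (x, y) s, rest ++ hfin.toFinset.toList), ⟨hG', ?_, ?_⟩,
        subset_insert _ _, ?_⟩
      · intro a ha
        rcases List.mem_append.1 ha with har | hal
        · exact hq a (List.mem_cons_of_mem _ har)
        · exact (hfin.mem_toFinset.1 (Finset.mem_toList.1 hal)).2
      · rintro p (rfl | hp) a ha
        · exact Or.inr (List.mem_append_right _ (Finset.mem_toList.2 (hfin.mem_toFinset.2 ha)))
        · rcases hcov p hp ha with haP | haq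
          · exact Or.inl (image_mono (subset_insert _ _) haP)
          · rcases List.mem_cons.1 haq with rfl | har
            · exact Or.inl ⟨(a, y), mem_insert _ _, rfl⟩
            · exact Or.inr (List.mem_append_left _ har)
      · rintro x' rest' heq
        injection heq with h1 h2
        subst h1; subst h2
        exact ⟨⟨(x, y), mem_insert _ _, rfl⟩, hfin.toFinset.toList, rfl⟩

noncomputable def seq [M.Finitary] (hB₀ : M.IsBase B₀) (hB₁ : M.IsBase B₁)
    (hSw : ∀ y ∈ B₁ \ B₀, Sw y ⊆ B₀ ∧ (Sw y).Finite ∧ y ∈ M.closure (Sw y))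
    (init : {sq : Set (α × α) × List α // StInv M B₀ B₁ Sw sq}) :
    ℕ → {sq : Set (α × α) × List α // StInv M B₀ B₁ Sw sq}
  | 0 => init
  | n + 1 =>
    ⟨(step_ex hB₀ hB₁ hSw (seq hB₀ hB₁ hSw init n).1 (seq hB₀ hB₁ hSw init n).2).choose,
      (step_ex hB₀ hB₁ hSw (seq hB₀ hB₁ hSw init n).1
        (seq hB₀ hB₁ hSw init n).2).choose_spec.1⟩

lemma seq_succ [M.Finitary] (hB₀ : M.IsBase B₀) (hB₁ : M.IsBase B₁)
    (hSw : ∀ y ∈ B₁ \ B₀, Sw y ⊆ B₀ ∧ (Sw y).Finite ∧ y ∈ M.closure (Sw y))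
    (init : {sq : Set (α × α) × List α // StInv M B₀ B₁ Sw sq}) (n : ℕ) :
    (seq hB₀ hB₁ hSw init n).1.1 ⊆ (seq hB₀ hB₁ hSw init (n + 1)).1.1 ∧
    (∀ x rest, (seq hB₀ hB₁ hSw init n).1.2 = x :: rest →
      (x ∈ Prod.fst '' (seq hB₀ hB₁ hSw init (n + 1)).1.1 ∧
        ∃ app, (seq hB₀ hB₁ hSw init (n + 1)).1.2 = rest ++ app)) := by
  have hspec := (step_ex hB₀ hB₁ hSw (seq hB₀ hB₁ hSw init n).1
    (seq hB₀ hB₁ hSw init n).2).choose_spec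
  have hdef : (seq hB₀ hB₁ hSw init (n + 1)).1
      = (step_ex hB₀ hB₁ hSw (seq hB₀ hB₁ hSw init n).1
          (seq hB₀ hB₁ hSw init n).2).choose := rfl
  rw [hdef]
  exact ⟨hspec.2.1, hspec.2.2⟩

section Machine

variable [M.Finitary] (hB₀ : M.IsBase B₀) (hB₁ : M.IsBase B₁)
    (hSw : ∀ y ∈ B₁ \ B₀, Sw y ⊆ B₀ ∧ (Sw y).Finite ∧ y ∈ M.closure (Sw y))
    (init : {sq : Set (α × α) × List α // StInv M B₀ B₁ Sw sq})

lemma seq_mono_le {i j : ℕ} (hij : i ≤ j) :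
    (seq hB₀ hB₁ hSw init i).1.1 ⊆ (seq hB₀ hB₁ hSw init j).1.1 := by
  induction j with
  | zero => simp_all
  | succ n ih =>
    rcases Nat.lt_or_ge i (n + 1) with h | h
    · exact (ih (Nat.lt_succ_iff.1 h)).trans (seq_succ hB₀ hB₁ hSw init n).1
    · have : i = n + 1 := le_antisymm hij h
      subst this; exact Subset.rfl

lemma seq_fair : ∀ k n x, ((seq hB₀ hB₁ hSw init n).1.2)[k]? = some x →
    x ∈ Prod.fst '' (seq hB₀ hB₁ hSw init (n + k + 1)).1.1 := by
  intro k
  induction k with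
  | zero =>
    intro n x hx
    match hq : (seq hB₀ hB₁ hSw init n).1.2 with
    | [] => rw [hq] at hx; simp at hx
    | a :: rest =>
      rw [hq] at hx
      simp only [List.getElem?_cons_zero, Option.some.injEq] at hx
      exact hx ▸ ((seq_succ hB₀ hB₁ hSw init n).2 a rest hq).1
  | succ k ih =>
    intro n x hx
    match hq : (seq hB₀ hB₁ hSw init n).1.2 with
    | [] => rw [hq] at hx; simp at hx
    | a :: rest =>
      rw [hq] at hx
      rw [List.getElem?_cons_succ] at hx
      obtain ⟨app, happ⟩ := ((seq_succ hB₀ hB₁ hSw init n).2 a rest hq).2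
      have hlt : k < rest.length := by
        obtain ⟨h, -⟩ := List.getElem?_eq_some_iff.1 hx
        exact h
      have hx' : ((seq hB₀ hB₁ hSw init (n + 1)).1.2)[k]? = some x := by
        rw [happ, List.getElem?_append_left hlt]
        exact hx
      have := ih (n + 1) x hx'
      have harith : n + 1 + k + 1 = n + (k + 1) + 1 := by omega
      rwa [harith] at this

include hB₀ hB₁ hSw in
lemma exists_extension {m : Set (α × α)} (hm : GoodC M B₀ B₁ Sw m)
    {x₀ : α} (hx₀ : x₀ ∈ B₀ \ B₁) (hx₀P : x₀ ∉ Prod.fst '' m) :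
    ∃ s, GoodC M B₀ B₁ Sw s ∧ m ⊆ s ∧ m ≠ s := by
  classical
  have hinit : StInv M B₀ B₁ Sw (m, [x₀]) := by
    refine ⟨hm.1, ?_, ?_⟩
    · intro a ha
      rcases List.mem_singleton.1 ha with rfl
      exact hx₀
    · intro p hp a ha
      exact Or.inl (hm.2 p hp ha)
  set Seq := seq hB₀ hB₁ hSw ⟨(m, [x₀]), hinit⟩ with hSeq
  set Φ := ⋃ n, (Seq n).1.1 with hΦ
  have hmono : ∀ {i j : ℕ}, i ≤ j → (Seq i).1.1 ⊆ (Seq j).1.1 :=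
    fun {i j} h => seq_mono_le hB₀ hB₁ hSw _ h
  have hmem : ∀ p ∈ Φ, ∃ n, p ∈ (Seq n).1.1 := fun p hp => mem_iUnion.1 hp
  have hfstΦ : ∀ n, Prod.fst '' (Seq n).1.1 ⊆ Prod.fst '' Φ :=
    fun n => image_mono (subset_iUnion (fun n => (Seq n).1.1) n)
  -- pointwise facts
  have hpt : ∀ p ∈ Φ, p.1 ∈ B₀ \ B₁ ∧ p.2 ∈ B₁ \ B₀ ∧ p.2 ∉ M.closure (B₀ \ {p.1}) := by
    intro p hp
    obtain ⟨n, hn⟩ := hmem p hp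
    exact (Seq n).2.1.1 p hn
  have hfun : ∀ p ∈ Φ, ∀ q ∈ Φ, p.1 = q.1 → p = q := by
    intro p hp q hq heq
    obtain ⟨i, hi⟩ := hmem p hp
    obtain ⟨j, hj⟩ := hmem q hq
    rcases le_total i j with h | h
    · exact (Seq j).2.1.2.1 p (hmono h hi) q hj heq
    · exact (Seq i).2.1.2.1 p hi q (hmono h hj) heq
  have hinj : ∀ p ∈ Φ, ∀ q ∈ Φ, p.2 = q.2 → p = q := by
    intro p hp q hq heq
    obtain ⟨i, hi⟩ := hmem p hp
    obtain ⟨j, hj⟩ := hmem q hq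
    rcases le_total i j with h | h
    · exact (Seq j).2.1.2.2.1 p (hmono h hi) q hj heq
    · exact (Seq i).2.1.2.2.1 p hi q (hmono h hj) heq
  -- coverage of the union
  have hcov : ∀ p ∈ Φ, Sw p.2 ∩ (B₀ \ B₁) ⊆ Prod.fst '' Φ := by
    intro p hp a ha
    obtain ⟨n, hn⟩ := hmem p hp
    rcases (Seq n).2.2.2 p hn ha with haP | haq
    · exact hfstΦ n haP
    · obtain ⟨k, hk⟩ := List.mem_iff_getElem?.1 haq
      exact hfstΦ _ (seq_fair hB₀ hB₁ hSw _ k n a hk)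
  have hGoodΦ : GoodC M B₀ B₁ Sw Φ := by
    refine ⟨⟨hpt, hfun, hinj, ?_⟩, hcov⟩
    refine limit_base hB₀ hB₁ hSw (fun p hp => ⟨(hpt p hp).1, (hpt p hp).2.1⟩) ?_ hcov
    intro F hF hFfin
    have hc' : IsChain (· ⊆ ·) (range (fun n => Prod.fst '' (Seq n).1.1)) := by
      rintro _ ⟨i, rfl⟩ _ ⟨j, rfl⟩ -
      rcases le_total i j with h | h
      · exact Or.inl (image_mono (hmono h))
      · exact Or.inr (image_mono (hmono h))
    have hsub : F ∩ (Prod.fst '' Φ) ⊆ ⋃₀ (range (fun n => Prod.fst '' (Seq n).1.1)) := by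
      rintro a ⟨-, p, hp, rfl⟩
      obtain ⟨n, hn⟩ := hmem p hp
      exact ⟨Prod.fst '' (Seq n).1.1, ⟨n, rfl⟩, mem_image_of_mem _ hn⟩
    obtain ⟨t', ⟨n₀, rfl⟩, hn₀⟩ :=
      finite_subset_chain hc' (range_nonempty _) (hFfin.inter_of_left _) hsub
    have hFsub : F ⊆ (B₁ \ Prod.snd '' (Seq n₀).1.1) ∪ Prod.fst '' (Seq n₀).1.1 := by
      intro a haF
      by_cases haP : a ∈ Prod.fst '' Φ
      · exact Or.inr (hn₀ ⟨haF, haP⟩)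
      · rcases hF haF with ⟨haB₁, haQ⟩ | haP'
        · refine Or.inl ⟨haB₁, fun h => haQ ?_⟩
          exact image_mono (subset_iUnion (fun n => (Seq n).1.1) n₀) h
        · exact absurd haP' haP
    exact ((Seq n₀).2.1.2.2.2.indep).subset hFsub
  have hmΦ : m ⊆ Φ := subset_iUnion (fun n => (Seq n).1.1) 0
  have hx₀Φ : x₀ ∈ Prod.fst '' Φ := by
    have h0 : ((Seq 0).1.2)[0]? = some x₀ := rfl
    exact hfstΦ _ (seq_fair hB₀ hB₁ hSw _ 0 0 x₀ h0)
  refine ⟨Φ, hGoodΦ, hmΦ, fun h => hx₀P ?_⟩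
  rw [h]; exact hx₀Φ

end Machine

theorem exchange_bijection [M.Finitary] (hB₀ : M.IsBase B₀) (hB₁ : M.IsBase B₁) :
    ∃ m : Set (α × α),
      (∀ p ∈ m, p.2 ∉ M.closure (B₀ \ {p.1})) ∧
      (∀ p ∈ m, ∀ q ∈ m, p.1 = q.1 → p = q) ∧
      (∀ p ∈ m, ∀ q ∈ m, p.2 = q.2 → p = q) ∧
      Prod.fst '' m = B₀ \ B₁ ∧ Prod.snd '' m = B₁ \ B₀ := by
  classical
  have hSw_ex : ∀ y : α, ∃ S : Set α,
      y ∈ B₁ \ B₀ → (S ⊆ B₀ ∧ S.Finite ∧ y ∈ M.closure S) := by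
    intro y
    by_cases hy : y ∈ B₁ \ B₀
    · have hycl : y ∈ M.closure B₀ := by rw [hB₀.closure_eq]; exact hB₁.subset_ground hy.1
      obtain ⟨S, hS1, hS2, hS3⟩ := exists_finite_closure_witness hB₀.indep hycl hy.2
      exact ⟨S, fun _ => ⟨hS1, hS2, hS3⟩⟩
    · exact ⟨∅, fun h => absurd h hy⟩
  choose Sw hSw using hSw_ex
  have hSw' : ∀ y ∈ B₁ \ B₀, Sw y ⊆ B₀ ∧ (Sw y).Finite ∧ y ∈ M.closure (Sw y) :=
    fun y hy => hSw y hy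
  obtain ⟨m, -, hmGmem, hmax⟩ := zorn_subset_nonempty {s | GoodC M B₀ B₁ Sw s}
    (fun c hcS hchain hcne =>
      ⟨⋃₀ c, GoodC_sUnion hB₀ hB₁ hSw' hchain hcne (fun t ht => hcS ht),
        fun s hs => subset_sUnion_of_mem hs⟩) ∅ (GoodC_empty hB₁)
  have hmG : GoodC M B₀ B₁ Sw m := hmGmem
  have hPX : Prod.fst '' m = B₀ \ B₁ := by
    apply Subset.antisymm hmG.1.fst_subset
    intro x hx
    by_contra hxP
    obtain ⟨s, hsG, hms, hneq⟩ := exists_extension hB₀ hB₁ hSw' hmG hx hxP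
    exact hneq (le_antisymm hms (hmax hsG hms))
  have hQY : Prod.snd '' m = B₁ \ B₀ := by
    apply Subset.antisymm hmG.1.snd_subset
    have hbase := hmG.1.2.2.2
    rw [hPX] at hbase
    have hsub : B₀ ⊆ (B₁ \ Prod.snd '' m) ∪ (B₀ \ B₁) := by
      intro a ha
      by_cases haB₁ : a ∈ B₁
      · exact Or.inl ⟨haB₁, fun h => (hmG.1.snd_subset h).2 ha⟩
      · exact Or.inr ⟨ha, haB₁⟩
    have hEq : B₀ = (B₁ \ Prod.snd '' m) ∪ (B₀ \ B₁) := hB₀.eq_of_subset_isBase hbase hsub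
    intro y hy
    by_contra hyQ
    exact hy.2 (by rw [hEq]; exact Or.inl ⟨hy.1, hyQ⟩)
  exact ⟨m, fun p hp => (hmG.1.1 p hp).2.2, hmG.1.2.1, hmG.1.2.2.1, hPX, hQY⟩


theorem stmt_3' {α : Type*} (M : Matroid α) [M.Finitary]
    {B₀ B₁ : Set α} (hB₀ : M.IsBase B₀) (hB₁ : M.IsBase B₁) :
    ∃ f : B₀ → B₁, Function.Bijective f ∧
      ∀ x : B₀, M.IsBase (insert (f x : α) (B₀ \ {(x : α)})) := by
  classical
  obtain ⟨m, hcl, hfun, hinj, hPX, hQY⟩ := AP.exchange_bijection hB₀ hB₁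
  have hex : ∀ x : B₀, ∃ b : B₁,
      ((x : α) ∈ B₁ → (b : α) = x) ∧ ((x : α) ∉ B₁ → ((x : α), (b : α)) ∈ m) := by
    rintro ⟨x, hx⟩
    by_cases hxB₁ : x ∈ B₁
    · exact ⟨⟨x, hxB₁⟩, fun _ => rfl, fun h => absurd hxB₁ h⟩
    · have hxm : x ∈ Prod.fst '' m := by rw [hPX]; exact ⟨hx, hxB₁⟩
      obtain ⟨p, hp, hp1⟩ := hxm
      have hp2 : p.2 ∈ B₁ \ B₀ := by rw [← hQY]; exact ⟨p, hp, rfl⟩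
      refine ⟨⟨p.2, hp2.1⟩, fun h => absurd h hxB₁, fun _ => ?_⟩
      have hpx : p = (x, p.2) := Prod.ext hp1 rfl
      exact hpx ▸ hp
  choose f hf1 hf2 using hex
  have hsnd : ∀ x : B₀, (x : α) ∉ B₁ → (f x : α) ∈ B₁ \ B₀ := by
    intro x hx
    rw [← hQY]
    exact ⟨_, hf2 x hx, rfl⟩
  refine ⟨f, ⟨?_, ?_⟩, ?_⟩
  · intro a b hab
    by_cases haB₁ : (a : α) ∈ B₁ <;> by_cases hbB₁ : (b : α) ∈ B₁
    · apply Subtype.ext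
      rw [← hf1 a haB₁, ← hf1 b hbB₁, hab]
    · exfalso
      have h1 : (f b : α) ∉ B₀ := (hsnd b hbB₁).2
      rw [← hab, hf1 a haB₁] at h1
      exact h1 a.2
    · exfalso
      have h1 : (f a : α) ∉ B₀ := (hsnd a haB₁).2
      rw [hab, hf1 b hbB₁] at h1
      exact h1 b.2
    · have hpa := hf2 a haB₁
      have hpb := hf2 b hbB₁
      have hab' : ((a : α), (f a : α)).2 = ((b : α), (f b : α)).2 := by
        simp only
        rw [hab]
      have := hinj _ hpa _ hpb hab'
      exact Subtype.ext (congrArg Prod.fst this)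
  · intro b
    by_cases hbB₀ : (b : α) ∈ B₀
    · exact ⟨⟨b, hbB₀⟩, Subtype.ext (hf1 ⟨b, hbB₀⟩ b.2)⟩
    · have hbm : (b : α) ∈ Prod.snd '' m := by rw [hQY]; exact ⟨b.2, hbB₀⟩
      obtain ⟨p, hp, hp2⟩ := hbm
      have hp1 : p.1 ∈ B₀ \ B₁ := by rw [← hPX]; exact ⟨p, hp, rfl⟩
      refine ⟨⟨p.1, hp1.1⟩, ?_⟩
      have hpair := hf2 ⟨p.1, hp1.1⟩ hp1.2
      have heq := hfun _ hpair p hp rfl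
      apply Subtype.ext
      exact (congrArg Prod.snd heq).trans hp2
  · intro x
    by_cases hxB₁ : (x : α) ∈ B₁
    · rw [hf1 x hxB₁, insert_diff_singleton, insert_eq_of_mem x.2]
      exact hB₀
    · have hpair := hf2 x hxB₁
      have hcl' := hcl _ hpair
      have hfxY : (f x : α) ∈ B₁ \ B₀ := hsnd x hxB₁
      have hind : M.Indep (insert (f x : α) (B₀ \ {(x : α)})) := by
        rw [(hB₀.indep.subset diff_subset).insert_indep_iff_of_notMem
          (fun h => hfxY.2 h.1)]
        exact ⟨hB₁.subset_ground hfxY.1, hcl'⟩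
      exact hB₀.exchange_isBase_of_indep hfxY.2 hind

end AP

theorem stmt_3 {α : Type*} (M : Matroid α) [M.Finitary]
    {B₀ B₁ : Set α} (hB₀ : M.IsBase B₀) (hB₁ : M.IsBase B₁) :
    ∃ f : B₀ → B₁, Function.Bijective f ∧
      ∀ x : B₀, M.IsBase (insert (f x : α) (B₀ \ {(x : α)})) := by
  exact AP.stmt_3' M hB₀ hB₁
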